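/- Assume d^* < ∞ and lim_{k→∞} |β_k|^{−1} / min{d_k, d_{k+1}} = 0. Then for every ε > 0 there exists N ∈ ℕ such that every piecewise H¹ function f with Σ_k ∫_{Δ_k}(|f'(x)|² + |f(x)|²) dx ≤ 1 satisfies Σ_{k ≥ N} |f(x_k+) − f(x_k−)|² / |β_k| ≤ ε. (This uniform tail estimate is the core of the compactness of the jump map i_{X,β} : W^{1,2}(ℝ₊∖X; q) → ℓ²(ℕ; |β|^{−1}) in Lemma 4.1.) -/

import Mathlib

open MeasureTheory Set Filter

noncomputable section

/-- A function that is *piecewise `H¹`* with respect to the partition points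
`x 0 < x 1 < x 2 < ⋯` of `[0,∞)`: on each interval `Δ_{k+1} = [x k, x (k+1)]` it is
absolutely continuous with derivative `f' ∈ L²`, encoded via the fundamental
theorem of calculus; `fr k = f(x k +)` and `fl (k+1) = f(x (k+1) −)` are the
one-sided limits at the nodes. -/
structure PW1 (x : ℕ → ℝ) where
  f : ℝ → ℝ
  f' : ℝ → ℝ
  fr : ℕ → ℝ
  fl : ℕ → ℝ
  int_d : ∀ k, IntegrableOn f' (Icc (x k) (x (k + 1))) volume
  sq_d : ∀ k, IntegrableOn (fun t => f' t ^ 2) (Icc (x k) (x (k + 1))) volume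
  ftc : ∀ k, ∀ t ∈ Ioo (x k) (x (k + 1)), f t = fr k + ∫ s in Ioc (x k) t, f' s
  fl_eq : ∀ k, fl (k + 1) = fr k + ∫ s in Ioc (x k) (x (k + 1)), f' s

/-- The jump `f(x_{k+1}+) − f(x_{k+1}−)` of a piecewise `H¹` function at the
interior node `x (k+1)` (the paper's node `x_{k+1}`). -/
def PW1.jump {x : ℕ → ℝ} (F : PW1 x) (k : ℕ) : ℝ := F.fr (k + 1) - F.fl (k + 1)

/-- Membership in the domain of the form `t_{X,β,q}`: `f ∈ L²(0,∞)`,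
`∫₀^∞ |f'|² < ∞`, `∫₀^∞ |q| |f|² < ∞` and `Σ_k |f(x_k+) − f(x_k−)|²/|β_k| < ∞`. -/
def MemDom (x : ℕ → ℝ) (q : ℝ → ℝ) (β : ℕ → ℝ) (F : PW1 x) : Prop :=
  IntegrableOn (fun t => F.f t ^ 2) (Ioi 0) volume ∧
  IntegrableOn (fun t => F.f' t ^ 2) (Ioi 0) volume ∧
  IntegrableOn (fun t => |q t| * F.f t ^ 2) (Ioi 0) volume ∧
  Summable (fun k => F.jump k ^ 2 / |β (k + 1)|)

/-- The value of the quadratic form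
`t_{X,β,q}[f] = ∫₀^∞ (|f'|² + q |f|²) dx + Σ_k |f(x_k+) − f(x_k−)|²/β_k`. -/
def formVal (x : ℕ → ℝ) (q : ℝ → ℝ) (β : ℕ → ℝ) (F : PW1 x) : ℝ :=
  (∫ t in Ioi (0 : ℝ), (F.f' t ^ 2 + q t * F.f t ^ 2)) +
    ∑' k, F.jump k ^ 2 / β (k + 1)

/- ### Auxiliary lemmas -/

/-- Cauchy–Schwarz for set integrals on the real line. -/
private lemma cs_integral {s : Set ℝ} (hs : MeasurableSet s) (hfin : volume s ≠ ⊤)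
    {g : ℝ → ℝ} (h1 : IntegrableOn g s volume)
    (h2 : IntegrableOn (fun t => g t ^ 2) s volume) :
    (∫ t in s, g t) ^ 2 ≤ (volume s).toReal * ∫ t in s, g t ^ 2 := by
  set m : ℝ := (volume s).toReal with hm_def
  set I : ℝ := ∫ t in s, g t with hI_def
  set J : ℝ := ∫ t in s, g t ^ 2 with hJ_def
  have hm : 0 ≤ m := ENNReal.toReal_nonneg
  have hJnn : 0 ≤ J := setIntegral_nonneg hs fun t _ => sq_nonneg _
  rcases eq_or_lt_of_le hm with hm0 | hmpos
  · have hvol : volume s = 0 := by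
      rcases (ENNReal.toReal_eq_zero_iff _).mp hm0.symm with h | h
      · exact h
      · exact absurd h hfin
    have hI0 : I = 0 := by
      rw [hI_def, Measure.restrict_eq_zero.mpr hvol, integral_zero_measure]
    rw [hI0, ← hm0]
    simp
  · have hconst : IntegrableOn (fun _ : ℝ => I ^ 2) s volume :=
      integrableOn_const hfin
    have key : (0:ℝ) ≤ ∫ t in s, (m * g t - I) ^ 2 :=
      setIntegral_nonneg hs fun t _ => sq_nonneg _
    have expand : (∫ t in s, (m * g t - I) ^ 2)
        = m ^ 2 * J - (2 * m * I) * I + I ^ 2 * m := by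
      have e1 : (fun t => (m * g t - I) ^ 2)
          = fun t => (m ^ 2 * (g t ^ 2) - (2 * m * I) * g t) + I ^ 2 := by
        funext t; ring
      have hsub : IntegrableOn (fun t => m ^ 2 * (g t ^ 2) - (2 * m * I) * g t) s volume :=
        (h2.const_mul (m ^ 2)).sub (h1.const_mul (2 * m * I))
      rw [e1, integral_add hsub hconst,
        integral_sub (h2.const_mul (m ^ 2)) (h1.const_mul (2 * m * I)),
        integral_const_mul, integral_const_mul, setIntegral_const, smul_eq_mul,
        measureReal_def, ← hm_def]
      ring
    rw [expand] at key
    nlinarith [key, hmpos]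

/-- Integrating a constant lower bound over `Ioo a b`. -/
private lemma const_mul_le_integral {a b : ℝ} (hab : a < b) {h : ℝ → ℝ}
    (hint : IntegrableOn h (Ioo a b) volume) {c : ℝ}
    (hpt : ∀ t ∈ Ioo a b, c ≤ h t) :
    c * (b - a) ≤ ∫ t in Ioo a b, h t := by
  have hvol : (volume (Ioo a b)).toReal = b - a := by
    rw [Real.volume_Ioo, ENNReal.toReal_ofReal (by linarith)]
  have hconst : IntegrableOn (fun _ : ℝ => c) (Ioo a b) volume :=
    integrableOn_const (by rw [Real.volume_Ioo]; exact ENNReal.ofReal_ne_top)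
  calc c * (b - a) = ∫ _ in Ioo a b, c := by
        rw [setIntegral_const, measureReal_def, hvol, smul_eq_mul, mul_comm]
    _ ≤ _ := setIntegral_mono_on hconst hint measurableSet_Ioo hpt

/-- The square of a piecewise `H¹` function is integrable on each interval. -/
private lemma f_sq_int (x : ℕ → ℝ) (F : PW1 x) (k : ℕ) :
    IntegrableOn (fun t => F.f t ^ 2) (Ioo (x k) (x (k + 1))) volume := by
  have hg : ContinuousOn (fun t => (F.fr k + ∫ s in Ioc (x k) t, F.f' s) ^ 2)
      (Icc (x k) (x (k + 1))) :=
    (continuousOn_const.add (intervalIntegral.continuousOn_primitive (F.int_d k))).pow 2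
  have hint : IntegrableOn (fun t => (F.fr k + ∫ s in Ioc (x k) t, F.f' s) ^ 2)
      (Ioo (x k) (x (k + 1))) volume :=
    (hg.integrableOn_Icc).mono_set Ioo_subset_Icc_self
  refine hint.congr_fun (fun t ht => ?_) measurableSet_Ioo
  rw [F.ftc k t ht]

/-- Trace estimate for the left limit at `x (k+1)`. -/
private lemma fl_bound (x : ℕ → ℝ) (hmono : StrictMono x) (F : PW1 x) (k : ℕ) :
    F.fl (k + 1) ^ 2 * (x (k + 1) - x k) ≤
      2 * (∫ t in Ioo (x k) (x (k + 1)), F.f t ^ 2)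
        + 2 * (x (k + 1) - x k) ^ 2 * ∫ t in Ioo (x k) (x (k + 1)), F.f' t ^ 2 := by
  have hab : x k < x (k + 1) := hmono (Nat.lt_succ_self k)
  set a := x k with ha
  set b := x (k + 1) with hb
  set J : ℝ := ∫ t in Ioo a b, F.f' t ^ 2 with hJ_def
  have hsqIoo : IntegrableOn (fun t => F.f' t ^ 2) (Ioo a b) volume :=
    (F.sq_d k).mono_set Ioo_subset_Icc_self
  have hJnn : 0 ≤ J := setIntegral_nonneg measurableSet_Ioo fun t _ => sq_nonneg _
  have hpt : ∀ t ∈ Ioo a b, F.fl (k + 1) ^ 2 - 2 * (b - a) * J ≤ 2 * F.f t ^ 2 := by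
    intro t ht
    have hta : a < t := ht.1
    have htb : t < b := ht.2
    have hint1 : IntegrableOn F.f' (Ioc a t) volume :=
      (F.int_d k).mono_set (fun z hz => ⟨hz.1.le, hz.2.trans htb.le⟩)
    have hint2 : IntegrableOn F.f' (Ioc t b) volume :=
      (F.int_d k).mono_set (fun z hz => ⟨(hta.trans hz.1).le, hz.2⟩)
    have hsplit : (∫ s in Ioc a b, F.f' s)
        = (∫ s in Ioc a t, F.f' s) + ∫ s in Ioc t b, F.f' s := by
      rw [← Ioc_union_Ioc_eq_Ioc hta.le htb.le,
        setIntegral_union (Ioc_disjoint_Ioc_of_le le_rfl) measurableSet_Ioc hint1 hint2]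
    set r : ℝ := ∫ s in Ioc t b, F.f' s with hr_def
    have hfl : F.fl (k + 1) = F.f t + r := by
      rw [F.fl_eq k, ← ha, ← hb, hsplit, F.ftc k t ht]; ring
    have hsq2 : IntegrableOn (fun s => F.f' s ^ 2) (Ioc t b) volume :=
      (F.sq_d k).mono_set (fun z hz => ⟨(hta.trans hz.1).le, hz.2⟩)
    have hcs : r ^ 2 ≤ (b - t) * ∫ s in Ioc t b, F.f' s ^ 2 := by
      have h := cs_integral measurableSet_Ioc
        (by rw [Real.volume_Ioc]; exact ENNReal.ofReal_ne_top) hint2 hsq2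
      rwa [Real.volume_Ioc, ENNReal.toReal_ofReal (by linarith)] at h
    have hmono2 : (∫ s in Ioc t b, F.f' s ^ 2) ≤ J := by
      refine setIntegral_mono_set hsqIoo (Eventually.of_forall fun s => sq_nonneg _) ?_
      refine (ae_le_set).mpr (measure_mono_null (fun z hz => ?_) (measure_singleton b))
      rcases hz with ⟨⟨hz1, hz2⟩, hz3⟩
      simp only [mem_Ioo, not_and, not_lt] at hz3
      exact le_antisymm hz2 (hz3 (hta.trans hz1))
    have hIocnn : (0:ℝ) ≤ ∫ s in Ioc t b, F.f' s ^ 2 :=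
      setIntegral_nonneg measurableSet_Ioc fun s _ => sq_nonneg _
    rw [hfl]
    nlinarith [hcs, hmono2, hIocnn, hJnn, sq_nonneg (F.f t - r),
      mul_le_mul_of_nonneg_right (show b - t ≤ b - a by linarith) hJnn,
      mul_le_mul_of_nonneg_left hmono2 (show (0:ℝ) ≤ b - t by linarith)]
  have hmain := const_mul_le_integral hab ((f_sq_int x F k).const_mul 2) hpt
  rw [integral_const_mul] at hmain
  nlinarith [hmain]

/-- Trace estimate for the right limit at `x (k+1)`. -/
private lemma fr_bound (x : ℕ → ℝ) (hmono : StrictMono x) (F : PW1 x) (k : ℕ) :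
    F.fr (k + 1) ^ 2 * (x (k + 2) - x (k + 1)) ≤
      2 * (∫ t in Ioo (x (k + 1)) (x (k + 2)), F.f t ^ 2)
        + 2 * (x (k + 2) - x (k + 1)) ^ 2 * ∫ t in Ioo (x (k + 1)) (x (k + 2)), F.f' t ^ 2 := by
  have hab : x (k + 1) < x (k + 2) := hmono (Nat.lt_succ_self (k + 1))
  set b := x (k + 1) with hb
  set c := x (k + 2) with hc
  set J : ℝ := ∫ t in Ioo b c, F.f' t ^ 2 with hJ_def
  have hsqIoo : IntegrableOn (fun t => F.f' t ^ 2) (Ioo b c) volume :=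
    (F.sq_d (k + 1)).mono_set Ioo_subset_Icc_self
  have hJnn : 0 ≤ J := setIntegral_nonneg measurableSet_Ioo fun t _ => sq_nonneg _
  have hpt : ∀ t ∈ Ioo b c, F.fr (k + 1) ^ 2 - 2 * (c - b) * J ≤ 2 * F.f t ^ 2 := by
    intro t ht
    have htb : b < t := ht.1
    have htc : t < c := ht.2
    have hint1 : IntegrableOn F.f' (Ioc b t) volume :=
      (F.int_d (k + 1)).mono_set (fun z hz => ⟨hz.1.le, hz.2.trans htc.le⟩)
    set r : ℝ := ∫ s in Ioc b t, F.f' s with hr_def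
    have hfr : F.fr (k + 1) = F.f t - r := by
      rw [F.ftc (k + 1) t ht]; ring
    have hsq2 : IntegrableOn (fun s => F.f' s ^ 2) (Ioc b t) volume :=
      (F.sq_d (k + 1)).mono_set (fun z hz => ⟨hz.1.le, hz.2.trans htc.le⟩)
    have hcs : r ^ 2 ≤ (t - b) * ∫ s in Ioc b t, F.f' s ^ 2 := by
      have h := cs_integral measurableSet_Ioc
        (by rw [Real.volume_Ioc]; exact ENNReal.ofReal_ne_top) hint1 hsq2
      rwa [Real.volume_Ioc, ENNReal.toReal_ofReal (by linarith)] at h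
    have hmono2 : (∫ s in Ioc b t, F.f' s ^ 2) ≤ J := by
      refine setIntegral_mono_set hsqIoo (Eventually.of_forall fun s => sq_nonneg _) ?_
      refine (ae_le_set).mpr ?_
      have hsub : Ioc b t \ Ioo b c = ∅ := by
        rw [diff_eq_empty]
        exact fun z hz => ⟨hz.1, lt_of_le_of_lt hz.2 htc⟩
      rw [hsub]; exact measure_empty
    have hIocnn : (0:ℝ) ≤ ∫ s in Ioc b t, F.f' s ^ 2 :=
      setIntegral_nonneg measurableSet_Ioc fun s _ => sq_nonneg _
    rw [hfr]
    nlinarith [hcs, hmono2, hIocnn, hJnn, sq_nonneg (F.f t + r),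
      mul_le_mul_of_nonneg_right (show t - b ≤ c - b by linarith) hJnn,
      mul_le_mul_of_nonneg_left hmono2 (show (0:ℝ) ≤ t - b by linarith)]
  have hmain := const_mul_le_integral hab ((f_sq_int x F (k + 1)).const_mul 2) hpt
  rw [integral_const_mul] at hmain
  nlinarith [hmain]

/-- **Core of Lemma 4.1** (compactness of the jump map): if `d^* < ∞` and
`|β_k|⁻¹ / min(d_k, d_{k+1}) → 0`, then the tails of the jump sums are
uniformly small over the unit ball of `W^{1,2}(ℝ₊∖X)`. -/
theorem stmt_16 (x : ℕ → ℝ) (hx0 : x 0 = 0) (hmono : StrictMono x)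
    (hxtop : Tendsto x atTop atTop)
    (β : ℕ → ℝ) (hβ : ∀ k, β (k + 1) ≠ 0)
    (D : ℝ) (hD : ∀ k, x (k + 1) - x k ≤ D)
    (hβ0 : Tendsto (fun k =>
      |β (k + 1)|⁻¹ / min (x (k + 1) - x k) (x (k + 2) - x (k + 1)))
      atTop (nhds 0)) :
    ∀ ε > 0, ∃ N : ℕ, ∀ F : PW1 x,
      Summable (fun k => ∫ t in Ioo (x k) (x (k + 1)), (F.f' t ^ 2 + F.f t ^ 2)) →
      (∑' k, ∫ t in Ioo (x k) (x (k + 1)), (F.f' t ^ 2 + F.f t ^ 2)) ≤ 1 →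
      (Summable (fun k => F.jump k ^ 2 / |β (k + 1)|) ∧
        (∑' k, F.jump (N + k) ^ 2 / |β (N + k + 1)|) ≤ ε) := by
  have hd : ∀ k : ℕ, 0 < x (k + 1) - x k := fun k => sub_pos.mpr (hmono (Nat.lt_succ_self k))
  have hDpos : 0 < D := lt_of_lt_of_le (hd 0) (hD 0)
  set K : ℝ := 4 * (1 + D ^ 2) with hK
  have hKpos : 0 < K := by positivity
  set m : ℕ → ℝ := fun k => min (x (k + 1) - x k) (x (k + 2) - x (k + 1)) with hm
  have hmpos : ∀ k, 0 < m k := fun k => lt_min (hd k) (hd (k + 1))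
  set w : ℕ → ℝ := fun k => |β (k + 1)|⁻¹ / m k with hw
  have hβ0' : Tendsto w atTop (nhds 0) := hβ0
  have hwnn : ∀ k, 0 ≤ w k := fun k => div_nonneg (inv_nonneg.2 (abs_nonneg _)) (hmpos k).le
  obtain ⟨W, hWmem⟩ := hβ0'.bddAbove_range
  have hWb : ∀ k, w k ≤ W := fun k => hWmem ⟨k, rfl⟩
  have hWnn : 0 ≤ W := le_trans (hwnn 0) (hWb 0)
  intro ε hε
  have hδ : 0 < ε / (2 * K) := by positivity
  have hev : ∀ᶠ k in atTop, w k < ε / (2 * K) := hβ0'.eventually (gt_mem_nhds hδ)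
  rcases eventually_atTop.mp hev with ⟨N, hN⟩
  refine ⟨N, fun F hIsum hIle => ?_⟩
  set I : ℕ → ℝ := fun k => ∫ t in Ioo (x k) (x (k + 1)), (F.f' t ^ 2 + F.f t ^ 2) with hI
  have hf2 : ∀ k, IntegrableOn (fun t => F.f t ^ 2) (Ioo (x k) (x (k + 1))) volume :=
    f_sq_int x F
  have hf'2 : ∀ k, IntegrableOn (fun t => F.f' t ^ 2) (Ioo (x k) (x (k + 1))) volume :=
    fun k => (F.sq_d k).mono_set Ioo_subset_Icc_self
  have hIsplit : ∀ k, I k = (∫ t in Ioo (x k) (x (k + 1)), F.f' t ^ 2)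
      + ∫ t in Ioo (x k) (x (k + 1)), F.f t ^ 2 :=
    fun k => integral_add (hf'2 k) (hf2 k)
  have hInn : ∀ k, 0 ≤ I k :=
    fun k => setIntegral_nonneg measurableSet_Ioo fun t _ => by positivity
  have hEnn : ∀ k, 0 ≤ ∫ t in Ioo (x k) (x (k + 1)), F.f t ^ 2 :=
    fun k => setIntegral_nonneg measurableSet_Ioo fun t _ => sq_nonneg _
  have hJnn : ∀ k, 0 ≤ ∫ t in Ioo (x k) (x (k + 1)), F.f' t ^ 2 :=
    fun k => setIntegral_nonneg measurableSet_Ioo fun t _ => sq_nonneg _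
  -- the key pointwise-in-`k` bound
  have hbound : ∀ k, F.jump k ^ 2 / |β (k + 1)| ≤ K * w k * (I k + I (k + 1)) := by
    intro k
    have h1 := fl_bound x hmono F k
    have h2 := fr_bound x hmono F k
    have hmd1 : m k ≤ x (k + 1) - x k := min_le_left _ _
    have hmd2 : m k ≤ x (k + 2) - x (k + 1) := min_le_right _ _
    have hd1D := hD k
    have hd2D := hD (k + 1)
    have hj : F.jump k ^ 2 * m k ≤ K * (I k + I (k + 1)) := by
      rw [PW1.jump, hIsplit k, hIsplit (k + 1)]
      have hsq1 : (x (k + 1) - x k) ^ 2 ≤ D ^ 2 := by nlinarith [hd k]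
      have hsq2 : (x (k + 2) - x (k + 1)) ^ 2 ≤ D ^ 2 := by nlinarith [hd (k + 1)]
      nlinarith [h1, h2, hEnn k, hEnn (k + 1), hJnn k, hJnn (k + 1), hd k, hd (k + 1),
        hmpos k, sq_nonneg (F.fr (k + 1) + F.fl (k + 1)),
        mul_nonneg (hmpos k).le (sq_nonneg (F.fr (k + 1) + F.fl (k + 1))),
        mul_le_mul_of_nonneg_left hmd2 (sq_nonneg (F.fr (k + 1))),
        mul_le_mul_of_nonneg_left hmd1 (sq_nonneg (F.fl (k + 1))),
        mul_le_mul_of_nonneg_right hsq1 (hJnn k),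
        mul_le_mul_of_nonneg_right hsq2 (hJnn (k + 1))]
    have hβinv : |β (k + 1)|⁻¹ = w k * m k := (div_mul_cancel₀ _ (hmpos k).ne').symm
    rw [div_eq_mul_inv, hβinv]
    calc F.jump k ^ 2 * (w k * m k) = (F.jump k ^ 2 * m k) * w k := by ring
      _ ≤ (K * (I k + I (k + 1))) * w k := mul_le_mul_of_nonneg_right hj (hwnn k)
      _ = K * w k * (I k + I (k + 1)) := by ring
  -- summability
  have hIsum' : Summable (fun k => I (k + 1)) := (summable_nat_add_iff 1).mpr hIsum
  have hSsum : Summable (fun k => K * W * (I k + I (k + 1))) := (hIsum.add hIsum').mul_left _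
  have hjnn : ∀ k, 0 ≤ F.jump k ^ 2 / |β (k + 1)| :=
    fun k => div_nonneg (sq_nonneg _) (abs_nonneg _)
  have hJmpSum : Summable (fun k => F.jump k ^ 2 / |β (k + 1)|) := by
    refine Summable.of_nonneg_of_le hjnn (fun k => (hbound k).trans ?_) hSsum
    exact mul_le_mul_of_nonneg_right (mul_le_mul_of_nonneg_left (hWb k) hKpos.le)
      (add_nonneg (hInn k) (hInn (k + 1)))
  refine ⟨hJmpSum, ?_⟩
  -- shifted summable families
  have inj1 : Function.Injective (fun k : ℕ => N + k) := fun p q h => Nat.add_left_cancel h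
  have inj2 : Function.Injective (fun k : ℕ => N + k + 1) :=
    fun p q h => Nat.add_left_cancel (Nat.succ_injective h)
  have hshift : Summable (fun k => F.jump (N + k) ^ 2 / |β (N + k + 1)|) := by
    have := hJmpSum.comp_injective inj1
    simpa [Function.comp_def] using this
  have hsh1 : Summable (fun k => I (N + k)) := by
    have := hIsum.comp_injective inj1
    simpa [Function.comp_def] using this
  have hsh2 : Summable (fun k => I (N + k + 1)) := by
    have := hIsum.comp_injective inj2
    simpa [Function.comp_def] using this
  have hS2 : Summable (fun k => K * (ε / (2 * K)) * (I (N + k) + I (N + k + 1))) :=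
    (hsh1.add hsh2).mul_left _
  have step1 : (∑' k, F.jump (N + k) ^ 2 / |β (N + k + 1)|)
      ≤ ∑' k, K * (ε / (2 * K)) * (I (N + k) + I (N + k + 1)) := by
    refine Summable.tsum_le_tsum (fun k => (hbound (N + k)).trans ?_) hshift hS2
    have hwk : w (N + k) ≤ ε / (2 * K) := (hN (N + k) (Nat.le_add_right N k)).le
    exact mul_le_mul_of_nonneg_right (mul_le_mul_of_nonneg_left hwk hKpos.le)
      (add_nonneg (hInn _) (hInn _))
  have htail1 : (∑' k, I (N + k)) ≤ ∑' k, I k :=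
    hsh1.tsum_le_tsum_of_inj (fun k => N + k) inj1 (fun c _ => hInn c) (fun k => le_rfl) hIsum
  have htail2 : (∑' k, I (N + k + 1)) ≤ ∑' k, I k :=
    hsh2.tsum_le_tsum_of_inj (fun k => N + k + 1) inj2 (fun c _ => hInn c) (fun k => le_rfl) hIsum
  have step2 : (∑' k, K * (ε / (2 * K)) * (I (N + k) + I (N + k + 1)))
      = K * (ε / (2 * K)) * ((∑' k, I (N + k)) + ∑' k, I (N + k + 1)) := by
    rw [tsum_mul_left, Summable.tsum_add hsh1 hsh2]
  have final : (∑' k, F.jump (N + k) ^ 2 / |β (N + k + 1)|) ≤ K * (ε / (2 * K)) * 2 := by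
    rw [step2] at step1
    refine step1.trans ?_
    have h12 : (∑' k, I (N + k)) + (∑' k, I (N + k + 1)) ≤ 2 := by
      have := htail1.trans hIle
      have := htail2.trans hIle
      linarith
    exact mul_le_mul_of_nonneg_left h12 (by positivity)
  have : K * (ε / (2 * K)) * 2 = ε := by field_simp
  linarith [final, this]

end
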